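/- Let E be a real Hilbert space, let F : E → ℝ be differentiable, L-smooth with L > 0, and μ-strongly convex with μ > 0, and let W_g* ∈ E be a global minimizer of F with F* = F(W_g*). Let (Ω, P) be a probability space, W, W* ∈ E, η ≥ 0, and let g, q : Ω → E be square-integrable random vectors with E[g] = ḡ and E[q] = ∇F(W̄), where W̄ := W − η ḡ. Assume E[‖q − ∇F(W̄)‖²] ≤ σ_g² and E[⟨ḡ − g, ∇F(W̄) − q⟩] = 0. Then for every γ with 0 < γ ≤ 1/(2L): E[‖W − η g − γ q − W*‖²] ≤ E[‖W − η g − W*‖²] + γ² σ_g² + (2/μ)(F(W*) − F*) − 2γ(1 + μ/L − 2μγ)(F(W̄) − F*). -/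

import Mathlib

open MeasureTheory
open scoped RealInnerProductSpace

section FedEGGAux

variable {E : Type*} [NormedAddCommGroup E] [InnerProductSpace ℝ E] [CompleteSpace E]

/-- Descent lemma for an `L`-smooth function. -/
lemma fedegg_descent (F : E → ℝ) (L : ℝ) (hL : 0 < L)
    (hdiff : Differentiable ℝ F)
    (hsmooth : ∀ x y : E, ‖gradient F x - gradient F y‖ ≤ L * ‖x - y‖)
    (a b : E) :
    F b ≤ F a + ⟪gradient F a, b - a⟫ + L / 2 * ‖b - a‖ ^ 2 := by
  set v := b - a with hv
  set c1 : ℝ := ⟪gradient F a, v⟫ with hc1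
  set c2 : ℝ := L / 2 * ‖v‖ ^ 2 with hc2
  set φ : ℝ → ℝ := fun t => F (a + t • v) - t * c1 - t ^ 2 * c2 with hφ
  have hd : ∀ t : ℝ, HasDerivAt φ
      (⟪gradient F (a + t • v), v⟫ - c1 - 2 * t * c2) t := by
    intro t
    have hc : HasDerivAt (fun s : ℝ => a + s • v) v t := by
      simpa using ((hasDerivAt_id t).smul_const v).const_add a
    have hF : HasDerivAt (fun s : ℝ => F (a + s • v)) ⟪gradient F (a + t • v), v⟫ t := by
      have := (hdiff (a + t • v)).hasGradientAt.hasFDerivAt.comp_hasDerivAt t hc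
      rw [InnerProductSpace.toDual_apply_apply] at this
      exact this
    have h1 : HasDerivAt (fun s : ℝ => s * c1) c1 t := by
      simpa using (hasDerivAt_id t).mul_const c1
    have h2 : HasDerivAt (fun s : ℝ => s ^ 2 * c2) (2 * t * c2) t := by
      simpa [mul_comm] using ((hasDerivAt_pow 2 t).mul_const c2)
    exact (hF.sub h1).sub h2
  have hderiv_nonpos : ∀ t : ℝ, 0 ≤ t → deriv φ t ≤ 0 := by
    intro t ht
    rw [(hd t).deriv]
    have h1 : ⟪gradient F (a + t • v) - gradient F a, v⟫ ≤ L * t * ‖v‖ ^ 2 := by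
      calc ⟪gradient F (a + t • v) - gradient F a, v⟫
          ≤ ‖gradient F (a + t • v) - gradient F a‖ * ‖v‖ := real_inner_le_norm _ _
        _ ≤ (L * ‖(a + t • v) - a‖) * ‖v‖ := by
            gcongr; exact hsmooth _ _
        _ = L * t * ‖v‖ ^ 2 := by
            rw [show (a + t • v) - a = t • v by abel, norm_smul]
            simp [abs_of_nonneg ht]
            ring
    have h2 : ⟪gradient F (a + t • v), v⟫ - c1 =
        ⟪gradient F (a + t • v) - gradient F a, v⟫ := by
      rw [inner_sub_left]
    rw [sub_sub, ← sub_sub, h2]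
    have : 2 * t * c2 = L * t * ‖v‖ ^ 2 := by rw [hc2]; ring
    linarith [h1, this]
  have hanti : AntitoneOn φ (Set.Icc (0:ℝ) 1) := by
    apply antitoneOn_of_deriv_nonpos (convex_Icc 0 1)
    · exact fun t _ => ((hd t).differentiableAt.continuousAt).continuousWithinAt
    · exact fun t _ => (hd t).differentiableAt.differentiableWithinAt
    · intro t ht
      rw [interior_Icc] at ht
      exact hderiv_nonpos t ht.1.le
  have h01 : φ 1 ≤ φ 0 :=
    hanti (Set.left_mem_Icc.2 zero_le_one) (Set.right_mem_Icc.2 zero_le_one) zero_le_one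
  have h0 : φ 0 = F a := by simp [hφ]
  have h1 : φ 1 = F b - c1 - c2 := by
    simp [hφ, hv]
  rw [h0, h1] at h01
  rw [hc1, hc2] at h01
  linarith

/-- Lower smoothness inequality for a convex `L`-smooth function. -/
lemma fedegg_lower (F : E → ℝ) (L μ : ℝ) (hL : 0 < L) (hμ : 0 < μ)
    (hdiff : Differentiable ℝ F)
    (hsmooth : ∀ x y : E, ‖gradient F x - gradient F y‖ ≤ L * ‖x - y‖)
    (hsc : ∀ x y : E, F y ≥ F x + ⟪gradient F x, y - x⟫ + μ / 2 * ‖y - x‖ ^ 2)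
    (x y : E) :
    F x + ⟪gradient F x, y - x⟫ + 1 / (2 * L) * ‖gradient F y - gradient F x‖ ^ 2 ≤ F y := by
  set w := gradient F y - gradient F x with hw
  set z := y - (1 / L) • w with hz
  have hconv : F x + ⟪gradient F x, z - x⟫ ≤ F z := by
    have h := hsc x z
    nlinarith [mul_nonneg (by linarith : (0:ℝ) ≤ μ / 2) (sq_nonneg ‖z - x‖)]
  have hdesc : F z ≤ F y + ⟪gradient F y, z - y⟫ + L / 2 * ‖z - y‖ ^ 2 :=
    fedegg_descent F L hL hdiff hsmooth y z
  have hzy : z - y = -((1 / L) • w) := by rw [hz]; abel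
  have hin : ⟪gradient F y, z - y⟫ = -(1 / L) * ⟪gradient F y, w⟫ := by
    rw [hzy, inner_neg_right, real_inner_smul_right]; ring
  have hnz : ‖z - y‖ ^ 2 = (1 / L) ^ 2 * ‖w‖ ^ 2 := by
    rw [hzy, norm_neg, norm_smul, mul_pow]
    congr 1
    rw [Real.norm_eq_abs, abs_of_nonneg (by positivity : (0:ℝ) ≤ 1 / L)]
  have hzx : ⟪gradient F x, z - x⟫ = ⟪gradient F x, y - x⟫ - (1 / L) * ⟪gradient F x, w⟫ := by
    rw [hz, show y - (1 / L) • w - x = (y - x) - (1 / L) • w by abel, inner_sub_right,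
      real_inner_smul_right]
  have hww : ⟪gradient F y, w⟫ - ⟪gradient F x, w⟫ = ‖w‖ ^ 2 := by
    rw [← inner_sub_left, ← hw, real_inner_self_eq_norm_sq]
  have hL' : (0:ℝ) < 1 / L := by positivity
  rw [hzx] at hconv
  rw [hin, hnz] at hdesc
  have key : F x + ⟪gradient F x, y - x⟫ + (1 / L) * ‖w‖ ^ 2 - L / 2 * (1 / L) ^ 2 * ‖w‖ ^ 2 ≤ F y := by
    nlinarith [hconv, hdesc, hww]
  have : (1 / L) * ‖w‖ ^ 2 - L / 2 * (1 / L) ^ 2 * ‖w‖ ^ 2 = 1 / (2 * L) * ‖w‖ ^ 2 := by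
    field_simp
    ring
  linarith [key, this.symm.le, this.le]

/-- The gradient vanishes at a global minimiser. -/
lemma fedegg_grad_zero (F : E → ℝ) (hdiff : Differentiable ℝ F)
    (Wg : E) (hWg : ∀ x : E, F Wg ≤ F x) : gradient F Wg = 0 := by
  have hmin : IsLocalMin F Wg := Filter.Eventually.of_forall hWg
  have h := hmin.hasFDerivAt_eq_zero (hdiff Wg).hasGradientAt.hasFDerivAt
  have := congrArg (InnerProductSpace.toDual ℝ E).symm h
  rw [← (InnerProductSpace.toDual ℝ E).symm_apply_apply (gradient F Wg), h, map_zero]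

/-- Pointwise inner products of square-integrable functions are integrable. -/
lemma fedegg_integrable_inner {Ω : Type*} [MeasurableSpace Ω] {P : Measure Ω}
    (f h : Ω → E) (hf : MemLp f 2 P) (hh : MemLp h 2 P) :
    Integrable (fun ω => ⟪f ω, h ω⟫) P := by
  have hI := MeasureTheory.L2.integrable_inner (𝕜 := ℝ) (hf.toLp f) (hh.toLp h)
  apply hI.congr
  filter_upwards [hf.coeFn_toLp, hh.coeFn_toLp] with ω h1 h2
  rw [h1, h2]

/-- The deterministic core inequality. -/
lemma fedegg_det (F : E → ℝ) (L μ : ℝ) (hL : 0 < L) (hμ : 0 < μ)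
    (hdiff : Differentiable ℝ F)
    (hsmooth : ∀ x y : E, ‖gradient F x - gradient F y‖ ≤ L * ‖x - y‖)
    (hsc : ∀ x y : E, F y ≥ F x + ⟪gradient F x, y - x⟫ + μ / 2 * ‖y - x‖ ^ 2)
    (Wg : E) (hWg : ∀ x : E, F Wg ≤ F x)
    (Wbar Wstar : E) (γ : ℝ) (hγ : 0 < γ) (hγL : γ ≤ 1 / (2 * L)) :
    -(2 * γ) * ⟪gradient F Wbar, Wbar - Wstar⟫ + γ ^ 2 * ‖gradient F Wbar‖ ^ 2 ≤
      2 / μ * (F Wstar - F Wg) - 2 * γ * (1 + μ / L - 2 * μ * γ) * (F Wbar - F Wg) := by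
  have hg0 : gradient F Wg = 0 := fedegg_grad_zero F hdiff Wg hWg
  have hilow := fedegg_lower F L μ hL hμ hdiff hsmooth hsc
  set G : ℝ := ‖gradient F Wbar‖ with hG
  set A : ℝ := ⟪gradient F Wbar, Wbar - Wg⟫ with hA
  set B : ℝ := ⟪gradient F Wbar, Wstar - Wg⟫ with hB
  set s : ℝ := ‖Wstar - Wg‖ with hs
  set Δ : ℝ := F Wbar - F Wg with hΔ
  set Δs : ℝ := F Wstar - F Wg with hΔs
  have hdec : ⟪gradient F Wbar, Wbar - Wstar⟫ = A - B := by
    rw [hA, hB, ← inner_sub_right, show Wbar - Wg - (Wstar - Wg) = Wbar - Wstar by abel]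
  have h1 : Δ + 1 / (2 * L) * G ^ 2 ≤ A := by
    have h := hilow Wbar Wg
    rw [hg0, zero_sub, norm_neg] at h
    have : ⟪gradient F Wbar, Wg - Wbar⟫ = -A := by
      rw [hA, ← inner_neg_right, show -(Wbar - Wg) = Wg - Wbar by abel]
    rw [this] at h
    simp only [hΔ, hG]
    linarith
  have h2 : B ≤ G * s := real_inner_le_norm _ _
  have h4 : μ / 2 * s ^ 2 ≤ Δs := by
    have h := hsc Wg Wstar
    rw [hg0] at h
    simp only [inner_zero_left] at h
    simp only [hΔs, hs]
    linarith
  have h5 : 2 * μ * Δ ≤ G ^ 2 := by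
    have h := hsc Wbar Wg
    have hcs : -(G * ‖Wg - Wbar‖) ≤ ⟪gradient F Wbar, Wg - Wbar⟫ := by
      have := real_inner_le_norm (gradient F Wbar) (-(Wg - Wbar))
      rw [inner_neg_right, norm_neg] at this
      linarith
    nlinarith [sq_nonneg (G - μ * ‖Wg - Wbar‖), hμ]
  have h6 : 0 ≤ Δ := by simp only [hΔ]; linarith [hWg Wbar]
  have h3 : 2 * (γ * G) * s ≤ (γ * G) ^ 2 + s ^ 2 := by nlinarith [sq_nonneg (γ * G - s)]
  have h4' : s ^ 2 ≤ 2 / μ * Δs := by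
    rw [div_mul_eq_mul_div, le_div_iff₀ hμ]
    nlinarith
  have h7 : 0 ≤ γ * (1 / L - 2 * γ) := by
    apply mul_nonneg hγ.le
    have hid : (2:ℝ) * (1 / (2 * L)) = 1 / L := by field_simp
    linarith
  have h8 : γ * (1 / L - 2 * γ) * (2 * μ * Δ) ≤ γ * (1 / L - 2 * γ) * G ^ 2 :=
    mul_le_mul_of_nonneg_left h5 h7
  have h1' : 2 * γ * (Δ + 1 / (2 * L) * G ^ 2) ≤ 2 * γ * A :=
    mul_le_mul_of_nonneg_left h1 (by linarith)
  have h2' : 2 * γ * B ≤ 2 * γ * (G * s) := mul_le_mul_of_nonneg_left h2 (by linarith)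
  have e1 : 2 * γ * (1 / (2 * L)) * G ^ 2 = γ * (1 / L) * G ^ 2 := by
    field_simp
  rw [hdec]
  have s1 : -(2 * γ) * (A - B) + γ ^ 2 * G ^ 2 ≤
      -(2 * γ) * Δ - γ * (1 / L) * G ^ 2 + 2 * γ ^ 2 * G ^ 2 + 2 / μ * Δs := by
    linarith
  have s2 : - (γ * (1 / L)) * G ^ 2 + 2 * γ ^ 2 * G ^ 2 ≤
      - (γ * (1 / L)) * (2 * μ * Δ) + 2 * γ ^ 2 * (2 * μ * Δ) := by linarith
  have e2 : 2 / μ * Δs - 2 * γ * (1 + μ / L - 2 * μ * γ) * Δ =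
      -(2 * γ) * Δ - (γ * (1 / L)) * (2 * μ * Δ) + 2 * γ ^ 2 * (2 * μ * Δ) + 2 / μ * Δs := by
    field_simp
    ring
  linarith

end FedEGGAux

/-- One-step FedEGG-versus-FedAvg comparison of Theorem 1 in which the
gradient-norm term has been eliminated using the Polyak–Łojasiewicz inequality
implied by μ-strong convexity. -/
theorem fedegg_one_step_pl_bound
    {E : Type*} [NormedAddCommGroup E] [InnerProductSpace ℝ E] [CompleteSpace E]
    (F : E → ℝ) (L μ : ℝ) (hL : 0 < L) (hμ : 0 < μ)
    (hdiff : Differentiable ℝ F)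
    (hsmooth : ∀ x y : E, ‖gradient F x - gradient F y‖ ≤ L * ‖x - y‖)
    (hsc : ∀ x y : E, F y ≥ F x + ⟪gradient F x, y - x⟫ + μ / 2 * ‖y - x‖ ^ 2)
    (Wg : E) (hWg : ∀ x : E, F Wg ≤ F x) (Fstar : ℝ) (hFstar : Fstar = F Wg)
    {Ω : Type*} [MeasurableSpace Ω] (P : Measure Ω) [IsProbabilityMeasure P]
    (W Wstar : E) (η : ℝ) (hη : 0 ≤ η)
    (g q : Ω → E) (hg : MemLp g 2 P) (hq : MemLp q 2 P)
    (gbar : E) (hgbar : ∫ ω, g ω ∂P = gbar)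
    (Wbar : E) (hWbar : Wbar = W - η • gbar)
    (hqbar : ∫ ω, q ω ∂P = gradient F Wbar)
    (σg : ℝ) (hvar : ∫ ω, ‖q ω - gradient F Wbar‖ ^ 2 ∂P ≤ σg ^ 2)
    (hcross : ∫ ω, ⟪gbar - g ω, gradient F Wbar - q ω⟫ ∂P = 0) :
    ∀ γ : ℝ, 0 < γ → γ ≤ 1 / (2 * L) →
      ∫ ω, ‖W - η • g ω - γ • q ω - Wstar‖ ^ 2 ∂P ≤
        (∫ ω, ‖W - η • g ω - Wstar‖ ^ 2 ∂P)
          + γ ^ 2 * σg ^ 2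
          + 2 / μ * (F Wstar - Fstar)
          - 2 * γ * (1 + μ / L - 2 * μ * γ) * (F Wbar - Fstar) := by
  intro γ hγ hγL
  set D : E := gradient F Wbar with hD
  -- the recentered random vector X
  set X : Ω → E := fun ω => (W - Wstar) - η • g ω with hX
  have hmX : MemLp X 2 P := by
    have : MemLp (fun ω => η • g ω) 2 P := by simpa [Pi.smul_def] using hg.const_smul η
    exact (memLp_const (W - Wstar)).sub this
  have hg1 : Integrable g P := hg.integrable one_le_two
  have hq1 : Integrable q P := hq.integrable one_le_two
  -- integrability facts
  have iXsq : Integrable (fun ω => ‖X ω‖ ^ 2) P :=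
    (memLp_two_iff_integrable_sq_norm hmX.1).mp hmX
  have iqsq : Integrable (fun ω => ‖q ω‖ ^ 2) P :=
    (memLp_two_iff_integrable_sq_norm hq.1).mp hq
  have iXq : Integrable (fun ω => ⟪X ω, q ω⟫) P := fedegg_integrable_inner X q hmX hq
  have igq : Integrable (fun ω => ⟪g ω, q ω⟫) P := fedegg_integrable_inner g q hg hq
  have iq_const : Integrable (fun ω => ⟪gbar, q ω⟫) P := hq1.const_inner gbar
  have ig_const : Integrable (fun ω => ⟪g ω, D⟫) P := hg1.inner_const D
  have iqsub : Integrable (fun ω => q ω - D) P := hq1.sub (integrable_const D)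
  have iqsubsq : Integrable (fun ω => ‖q ω - D‖ ^ 2) P := by
    have : MemLp (fun ω => q ω - D) 2 P := hq.sub (memLp_const D)
    exact (memLp_two_iff_integrable_sq_norm this.1).mp this
  have iqsub_inner : Integrable (fun ω => ⟪q ω - D, D⟫) P := iqsub.inner_const D
  -- E[⟨g, q⟩] = ⟨gbar, D⟩
  have e_gq : ∫ ω, ⟪g ω, q ω⟫ ∂P = ⟪gbar, D⟫ := by
    have hpt : ∀ ω, ⟪gbar - g ω, D - q ω⟫ =
        ⟪gbar, D⟫ - ⟪gbar, q ω⟫ - ⟪g ω, D⟫ + ⟪g ω, q ω⟫ := by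
      intro ω
      rw [inner_sub_left, inner_sub_right, inner_sub_right]
      ring
    have ia : Integrable (fun ω => ⟪gbar, D⟫ - ⟪gbar, q ω⟫) P :=
      (integrable_const _).sub iq_const
    have ib : Integrable (fun ω => ⟪gbar, D⟫ - ⟪gbar, q ω⟫ - ⟪g ω, D⟫) P := ia.sub ig_const
    have hI : ∫ ω, ⟪gbar - g ω, D - q ω⟫ ∂P =
        ⟪gbar, D⟫ - ⟪gbar, D⟫ - ⟪gbar, D⟫ + ∫ ω, ⟪g ω, q ω⟫ ∂P := by
      rw [integral_congr_ae (Filter.Eventually.of_forall hpt)]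
      rw [integral_add ib igq, integral_sub ia ig_const,
        integral_sub (integrable_const _) iq_const]
      have e1 : ∫ _ω, ⟪gbar, D⟫ ∂P = ⟪gbar, D⟫ := by simp
      have e2 : ∫ ω, ⟪gbar, q ω⟫ ∂P = ⟪gbar, D⟫ := by
        rw [integral_inner hq1, hqbar]
      have e3 : ∫ ω, ⟪g ω, D⟫ ∂P = ⟪gbar, D⟫ := by
        have h1 : (∫ ω, ⟪g ω, D⟫ ∂P) = ∫ ω, ⟪D, g ω⟫ ∂P :=
          integral_congr_ae (Filter.Eventually.of_forall fun ω => real_inner_comm _ _)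
        rw [h1, integral_inner hg1, hgbar, real_inner_comm]
      rw [e1, e2, e3]
    rw [hcross] at hI
    linarith
  -- E[⟨X, q⟩] = ⟨Wbar - Wstar, D⟩
  have e_Xq : ∫ ω, ⟪X ω, q ω⟫ ∂P = ⟪Wbar - Wstar, D⟫ := by
    have hpt : ∀ ω, ⟪X ω, q ω⟫ = ⟪W - Wstar, q ω⟫ - η * ⟪g ω, q ω⟫ := by
      intro ω
      rw [hX]
      simp only
      rw [inner_sub_left, real_inner_smul_left]
    have ic : Integrable (fun ω => η * ⟪g ω, q ω⟫) P := igq.const_mul η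
    rw [integral_congr_ae (Filter.Eventually.of_forall hpt),
      integral_sub (hq1.const_inner _) ic,
      integral_inner hq1, hqbar, integral_const_mul, e_gq]
    rw [show Wbar - Wstar = (W - Wstar) - η • gbar by rw [hWbar]; abel]
    simp [inner_sub_left, real_inner_smul_left]
  -- E[‖q‖²] = E[‖q - D‖²] + ‖D‖²
  have e_qsq : ∫ ω, ‖q ω‖ ^ 2 ∂P = (∫ ω, ‖q ω - D‖ ^ 2 ∂P) + ‖D‖ ^ 2 := by
    have hpt : ∀ ω, ‖q ω‖ ^ 2 = ‖q ω - D‖ ^ 2 + 2 * ⟪q ω - D, D⟫ + ‖D‖ ^ 2 := by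
      intro ω
      have : q ω = (q ω - D) + D := by abel
      rw [this]
      rw [norm_add_sq_real]
      ring_nf
      abel
    have id1 : Integrable (fun ω => 2 * ⟪q ω - D, D⟫) P := iqsub_inner.const_mul 2
    have id2 : Integrable (fun ω => ‖q ω - D‖ ^ 2 + 2 * ⟪q ω - D, D⟫) P := iqsubsq.add id1
    rw [integral_congr_ae (Filter.Eventually.of_forall hpt)]
    rw [integral_add id2 (integrable_const _), integral_add iqsubsq id1, integral_const_mul]
    have e0 : ∫ ω, ⟪q ω - D, D⟫ ∂P = 0 := by
      have h1 : (∫ ω, ⟪q ω - D, D⟫ ∂P) = ∫ ω, ⟪D, q ω - D⟫ ∂P :=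
        integral_congr_ae (Filter.Eventually.of_forall fun ω => real_inner_comm _ _)
      rw [h1, integral_inner iqsub, integral_sub hq1 (integrable_const D), hqbar]
      simp
    rw [e0]
    simp
  -- expansion of the left-hand side
  have e_main : ∫ ω, ‖W - η • g ω - γ • q ω - Wstar‖ ^ 2 ∂P =
      (∫ ω, ‖X ω‖ ^ 2 ∂P) - 2 * γ * (∫ ω, ⟪X ω, q ω⟫ ∂P) + γ ^ 2 * ∫ ω, ‖q ω‖ ^ 2 ∂P := by
    have hpt : ∀ ω, ‖W - η • g ω - γ • q ω - Wstar‖ ^ 2 =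
        ‖X ω‖ ^ 2 - 2 * γ * ⟪X ω, q ω⟫ + γ ^ 2 * ‖q ω‖ ^ 2 := by
      intro ω
      have h0 : W - η • g ω - γ • q ω - Wstar = X ω - γ • q ω := by
        rw [hX]; simp only; abel
      rw [h0, norm_sub_sq_real, real_inner_smul_right, norm_smul, mul_pow]
      simp only [Real.norm_eq_abs, sq_abs]
      ring
    have ie1 : Integrable (fun ω => 2 * γ * ⟪X ω, q ω⟫) P := iXq.const_mul (2 * γ)
    have ie2 : Integrable (fun ω => ‖X ω‖ ^ 2 - 2 * γ * ⟪X ω, q ω⟫) P := iXsq.sub ie1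
    have ie3 : Integrable (fun ω => γ ^ 2 * ‖q ω‖ ^ 2) P := iqsq.const_mul (γ ^ 2)
    rw [integral_congr_ae (Filter.Eventually.of_forall hpt)]
    rw [integral_add ie2 ie3, integral_sub iXsq ie1, integral_const_mul, integral_const_mul]
  -- the first term of the right-hand side
  have e_X : ∫ ω, ‖W - η • g ω - Wstar‖ ^ 2 ∂P = ∫ ω, ‖X ω‖ ^ 2 ∂P := by
    apply integral_congr_ae
    apply Filter.Eventually.of_forall
    intro ω
    rw [hX]
    simp only
    rw [show W - η • g ω - Wstar = W - Wstar - η • g ω by abel]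
  -- the deterministic inequality
  have hdet : -(2 * γ) * ⟪D, Wbar - Wstar⟫ + γ ^ 2 * ‖D‖ ^ 2 ≤
      2 / μ * (F Wstar - F Wg) - 2 * γ * (1 + μ / L - 2 * μ * γ) * (F Wbar - F Wg) :=
    fedegg_det F L μ hL hμ hdiff hsmooth hsc Wg hWg Wbar Wstar γ hγ hγL
  -- putting everything together
  rw [e_main, e_Xq, e_X, e_qsq, hFstar]
  have hvar' : γ ^ 2 * (∫ ω, ‖q ω - D‖ ^ 2 ∂P) ≤ γ ^ 2 * σg ^ 2 :=
    mul_le_mul_of_nonneg_left (by simpa [hD] using hvar) (sq_nonneg γ)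
  have hcomm : ⟪Wbar - Wstar, D⟫ = ⟪D, Wbar - Wstar⟫ := real_inner_comm _ _
  nlinarith [hdet, hvar', hcomm]
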